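/- There are no finite vertex-transitive graphs of motion 3. More precisely, if the automorphism group of a finite vertex-transitive graph Γ contains a 3-cycle, then Aut(Γ) has minimal degree 2. -/

import Mathlib

open Equiv Pointwise

/-- A graph is vertex-transitive if its automorphism group is transitive on the
vertices. -/
def IsVertexTransitive {V : Type*} (Γ : SimpleGraph V) : Prop :=
  ∀ u v : V, ∃ e : Γ ≃g Γ, e u = v

/-- The motion of a graph: the least number of vertices moved by a non-identity
automorphism (i.e. the minimal degree of its automorphism group). -/
noncomputable def motion {V : Type*} [Fintype V] [DecidableEq V] (Γ : SimpleGraph V) : ℕ :=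
  sInf {n | ∃ e : Γ ≃g Γ, (e.toEquiv : Equiv.Perm V) ≠ 1 ∧
    (Equiv.Perm.support (e.toEquiv : Equiv.Perm V)).card = n}

lemma motion_eq_two_of_threeCycle {V : Type} [Fintype V] [DecidableEq V] (Γ : SimpleGraph V)
    (e : Γ ≃g Γ) (h3 : (Equiv.Perm.support (e.toEquiv : Equiv.Perm V)).card = 3) :
    motion Γ = 2 := by
  set σ : Equiv.Perm V := (e.toEquiv : Equiv.Perm V) with hσ
  have hiff : ∀ u v, Γ.Adj (σ u) (σ v) ↔ Γ.Adj u v := fun u v => e.map_rel_iff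
  have h3c : σ.IsThreeCycle := card_support_eq_three_iff.mp h3
  obtain ⟨a, ha⟩ : σ.support.Nonempty := by
    rw [← Finset.card_pos, h3]; norm_num
  set b := σ a with hb
  set c := σ b with hc
  have hab : a ≠ b := fun h => (Equiv.Perm.mem_support.mp ha) h.symm
  have hbs : b ∈ σ.support := Equiv.Perm.apply_mem_support.mpr ha
  have hcs : c ∈ σ.support := Equiv.Perm.apply_mem_support.mpr hbs
  have hbc : b ≠ c := fun h => (Equiv.Perm.mem_support.mp hbs) h.symm
  have hσ3 : σ ^ 3 = 1 := by
    have := h3c.orderOf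
    rw [← this]; exact pow_orderOf_eq_one σ
  have hca : σ c = a := by
    have h1 : (σ ^ 3) a = a := by rw [hσ3]; rfl
    simpa [pow_succ, Equiv.Perm.mul_apply, ← hb, ← hc] using h1
  have hac : a ≠ c := by
    intro h
    exact (Equiv.Perm.mem_support.mp hcs) (h ▸ hca)
  -- support = {a, b, c}
  have hcard3 : ({a, b, c} : Finset V).card = 3 := by
    rw [Finset.card_insert_of_notMem (by simp [hab, hac]),
      Finset.card_insert_of_notMem (by simp [hbc]), Finset.card_singleton]
  have hsub : ({a, b, c} : Finset V) ⊆ σ.support := by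
    intro x hx
    simp only [Finset.mem_insert, Finset.mem_singleton] at hx
    rcases hx with rfl | rfl | rfl
    · exact ha
    · exact hbs
    · exact hcs
  have hsupp : σ.support = {a, b, c} :=
    (Finset.eq_of_subset_of_card_le hsub (le_of_eq (h3.trans hcard3.symm))).symm
  have hfix : ∀ v, v ≠ a → v ≠ b → v ≠ c → σ v = v := by
    intro v h1 h2 h3'
    have : v ∉ σ.support := by
      rw [hsupp]; simp [h1, h2, h3']
    exact Equiv.Perm.notMem_support.mp this
  -- key adjacency lemma
  have key : ∀ v, v ≠ a → v ≠ b → (Γ.Adj a v ↔ Γ.Adj b v) := by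
    intro v hva hvb
    by_cases hvc : v = c
    · subst hvc
      have k1 : Γ.Adj a b ↔ Γ.Adj c a := by
        have := hiff c a
        rw [hca] at this
        exact this
      have k2 : Γ.Adj b c ↔ Γ.Adj a b := hiff a b
      rw [Γ.adj_comm a c, ← k1, ← k2]
    · have hfv : σ v = v := hfix v hva hvb hvc
      have := hiff a v
      rw [← hb, hfv] at this
      exact this.symm
  have key' : ∀ v, v ≠ a → v ≠ b → (Γ.Adj v a ↔ Γ.Adj v b) := by
    intro v h1 h2
    rw [Γ.adj_comm v a, Γ.adj_comm v b]
    exact key v h1 h2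
  -- the swap (a b) is an automorphism
  have mono : ∀ u v, Γ.Adj u v → Γ.Adj (Equiv.swap a b u) (Equiv.swap a b v) := by
    intro u v huv
    by_cases hua : u = a
    · rw [hua] at huv ⊢
      rw [Equiv.swap_apply_left]
      by_cases hva : v = a
      · rw [hva] at huv; exact absurd huv (Γ.loopless.irrefl a)
      · by_cases hvb : v = b
        · rw [hvb] at huv ⊢
          rw [Equiv.swap_apply_right]
          exact Γ.adj_comm _ _ |>.mp huv
        · rw [Equiv.swap_apply_of_ne_of_ne hva hvb]
          exact (key v hva hvb).mp huv
    · by_cases hub : u = b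
      · rw [hub] at huv ⊢
        rw [Equiv.swap_apply_right]
        by_cases hva : v = a
        · rw [hva] at huv ⊢
          rw [Equiv.swap_apply_left]
          exact Γ.adj_comm _ _ |>.mp huv
        · by_cases hvb : v = b
          · rw [hvb] at huv; exact absurd huv (Γ.loopless.irrefl b)
          · rw [Equiv.swap_apply_of_ne_of_ne hva hvb]
            exact (key v hva hvb).mpr huv
      · rw [Equiv.swap_apply_of_ne_of_ne hua hub]
        by_cases hva : v = a
        · rw [hva] at huv ⊢
          rw [Equiv.swap_apply_left]
          exact (key' u hua hub).mp huv
        · by_cases hvb : v = b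
          · rw [hvb] at huv ⊢
            rw [Equiv.swap_apply_right]
            exact (key' u hua hub).mpr huv
          · rw [Equiv.swap_apply_of_ne_of_ne hva hvb]
            exact huv
  let t : Γ ≃g Γ :=
    ⟨Equiv.swap a b, by
      intro u v
      constructor
      · intro h
        have := mono _ _ h
        simpa [Equiv.swap_apply_self] using this
      · exact mono u v⟩
  have ht : (t.toEquiv : Equiv.Perm V) = Equiv.swap a b := rfl
  have h2mem : (2 : ℕ) ∈ {n | ∃ e : Γ ≃g Γ, (e.toEquiv : Equiv.Perm V) ≠ 1 ∧
      (Equiv.Perm.support (e.toEquiv : Equiv.Perm V)).card = n} := by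
    refine ⟨t, ?_, ?_⟩
    · rw [ht]
      exact Equiv.swap_eq_one_iff.not.mpr hab
    · rw [ht]
      exact Equiv.Perm.card_support_swap hab
  have hlb : ∀ n ∈ {n | ∃ e : Γ ≃g Γ, (e.toEquiv : Equiv.Perm V) ≠ 1 ∧
      (Equiv.Perm.support (e.toEquiv : Equiv.Perm V)).card = n}, 2 ≤ n := by
    rintro n ⟨f, hf1, rfl⟩
    exact Equiv.Perm.one_lt_card_support_of_ne_one hf1
  exact le_antisymm (Nat.sInf_le h2mem) (le_csInf ⟨2, h2mem⟩ hlb)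

theorem statement_12 {V : Type} [Fintype V] [DecidableEq V] (Γ : SimpleGraph V)
    (hvt : IsVertexTransitive Γ) :
    motion Γ ≠ 3 ∧
    ((∃ e : Γ ≃g Γ, Equiv.Perm.IsCycle (e.toEquiv : Equiv.Perm V) ∧
        (Equiv.Perm.support (e.toEquiv : Equiv.Perm V)).card = 3) →
      motion Γ = 2) := by
  constructor
  · intro hmot
    have hne : {n | ∃ e : Γ ≃g Γ, (e.toEquiv : Equiv.Perm V) ≠ 1 ∧
        (Equiv.Perm.support (e.toEquiv : Equiv.Perm V)).card = n}.Nonempty := by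
      rcases Set.eq_empty_or_nonempty {n | ∃ e : Γ ≃g Γ, (e.toEquiv : Equiv.Perm V) ≠ 1 ∧
          (Equiv.Perm.support (e.toEquiv : Equiv.Perm V)).card = n} with h | h
      · exfalso
        rw [motion, h, Nat.sInf_empty] at hmot
        exact absurd hmot (by norm_num)
      · exact h
    have hmem := Nat.sInf_mem hne
    rw [show sInf {n | ∃ e : Γ ≃g Γ, (e.toEquiv : Equiv.Perm V) ≠ 1 ∧
        (Equiv.Perm.support (e.toEquiv : Equiv.Perm V)).card = n} = motion Γ from rfl,
      hmot] at hmem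
    obtain ⟨f, _, hf3⟩ := hmem
    have := motion_eq_two_of_threeCycle Γ f hf3
    rw [this] at hmot
    norm_num at hmot
  · rintro ⟨f, _, hf3⟩
    exact motion_eq_two_of_threeCycle Γ f hf3
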